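/- The descriptors in Diff({d1},{d2}) are pairwise mutually exclusive: for any two distinct descriptors e, e' in Diff({d1},{d2}), ω(e) ∩ ω(e') = ∅. -/

import Mathlib

def WSExtends {V α : Type} (Dom : V → Finset α) (f : V → α) (d : V → Option α) : Prop :=
  (∀ x, f x ∈ Dom x) ∧ ∀ x a, d x = some a → f x = a

def omegaD {V α : Type} (Dom : V → Finset α) (d : V → Option α) : Set (V → α) :=
  {f | WSExtends Dom f d}

def DiffSet {V α : Type} [DecidableEq V] [DecidableEq α]
    (Dom : V → Finset α) (d1 d2 : V → Option α) (xs : List V) : Set (V → Option α) :=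
  { e | ∃ i : Fin xs.length, ∃ w' ∈ Dom (xs.get i),
      d2 (xs.get i) ≠ some w' ∧
      e = fun y => if y = xs.get i then some w'
            else if y ∈ xs.take i.val then d2 y else d1 y }

lemma mem_take_of_lt {V : Type} (xs : List V) (i j : Fin xs.length) (h : i.val < j.val) :
    xs.get i ∈ xs.take j.val := by
  have : (xs.take j.val)[i.val]'(by simp [Nat.lt_min]; omega) = xs.get i := by
    simp [List.getElem_take]
  rw [← this]
  exact List.getElem_mem _

lemma key_lt {V α : Type} [DecidableEq V] [DecidableEq α]
    (Dom : V → Finset α) (d1 d2 : V → Option α)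
    (xs : List V) (hnd : xs.Nodup)
    (hxs : ∀ y, y ∈ xs ↔ (d1 y = none ∧ d2 y ≠ none))
    (i j : Fin xs.length) (hij : i.val < j.val)
    (w' w'' : α) (hd2 : d2 (xs.get i) ≠ some w')
    (f : V → α)
    (hf : ∀ x a, (fun y => if y = xs.get i then some w'
            else if y ∈ xs.take i.val then d2 y else d1 y) x = some a → f x = a)
    (hf' : ∀ x a, (fun y => if y = xs.get j then some w''
            else if y ∈ xs.take j.val then d2 y else d1 y) x = some a → f x = a) :
    False := by
  set x := xs.get i with hx
  have h1 : f x = w' := hf x w' (by simp)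
  have hne : x ≠ xs.get j := by
    intro h
    have := (List.Nodup.get_inj_iff hnd).mp h
    omega
  have hmem : x ∈ xs.take j.val := mem_take_of_lt xs i j hij
  obtain ⟨b, hb⟩ : ∃ b, d2 x = some b := by
    have := ((hxs x).mp (by rw [hx]; exact xs.get_mem i)).2
    exact Option.ne_none_iff_exists'.mp this
  have h2 : f x = b := hf' x b (by simp [hmem, hb, show x ≠ xs[j.val] from hne])
  exact hd2 (by rw [hb, h1.symm.trans h2])

theorem stmt7 {V α : Type} [DecidableEq V] [DecidableEq α]
    (Dom : V → Finset α)
    (d1 d2 : V → Option α)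
    (hcons : ∀ x a b, d1 x = some a → d2 x = some b → a = b)
    (xs : List V) (hnd : xs.Nodup)
    (hxs : ∀ y, y ∈ xs ↔ (d1 y = none ∧ d2 y ≠ none)) :
    ∀ e ∈ DiffSet Dom d1 d2 xs, ∀ e' ∈ DiffSet Dom d1 d2 xs,
      e ≠ e' → omegaD Dom e ∩ omegaD Dom e' = ∅ := by
  rintro e ⟨i, w', hw', hd2, rfl⟩ e' ⟨j, w'', hw'', hd2', rfl⟩ hne
  rw [Set.eq_empty_iff_forall_notMem]
  rintro f ⟨⟨_, hf⟩, ⟨_, hf'⟩⟩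
  rcases lt_trichotomy i.val j.val with h | h | h
  · exact key_lt Dom d1 d2 xs hnd hxs i j h w' w'' hd2 f hf hf'
  · have hij : i = j := Fin.ext h
    subst hij
    have h1 : f (xs.get i) = w' := hf _ _ (by simp)
    have h2 : f (xs.get i) = w'' := hf' _ _ (by simp)
    exact hne (by rw [h1.symm.trans h2])
  · exact key_lt Dom d1 d2 xs hnd hxs j i h w'' w' hd2' f hf' hf
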